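/- For indeterminates x_1,…,x_n and y_1,…,y_n, with ȳ_j = 1/y_j, det[ 1/((1 − x_i y_j)(1 − x_i ȳ_j)) ]_{1≤i,j≤n} = Δ(x)_n Δ(y)_n ∏_{1≤i<j≤n} (1 − x_i x_j)(1 − ȳ_i ȳ_j) / ∏_{i,j=1}^{n} (1 − x_i y_j)(1 − x_i ȳ_j), as an identity of rational functions. -/

import Mathlib

open Finset Matrix

lemma prod_Ioi_split {M : Type*} [CommMonoid M] (n : ℕ) (f : Fin (n+1) → Fin (n+1) → M) :
    (∏ i : Fin (n+1), ∏ j ∈ Finset.Ioi i, f i j) =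
      (∏ i : Fin n, ∏ j ∈ Finset.Ioi i, f i.castSucc j.castSucc) *
        ∏ i : Fin n, f i.castSucc (Fin.last n) := by
  have key : ∀ (m : ℕ) (g : Fin m → M) (i : Fin m),
      ∏ j ∈ Finset.Ioi i, g j = ∏ j, if i < j then g j else 1 := by
    intro m g i
    rw [← Finset.prod_filter]
    congr 1
    ext j
    simp [Finset.mem_Ioi]
  simp only [key]
  rw [Fin.prod_univ_castSucc]
  have hlast : ∀ j : Fin (n+1), ¬ (Fin.last n < j) := fun j => not_lt.mpr (Fin.le_last j)
  simp only [hlast, if_false, Finset.prod_const_one, mul_one]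
  rw [← Finset.prod_mul_distrib]
  refine Finset.prod_congr rfl fun i _ => ?_
  rw [Fin.prod_univ_castSucc]
  simp [Fin.castSucc_lt_castSucc_iff, Fin.castSucc_lt_last]

lemma cauchy_affine {K : Type*} [Field K] :
    ∀ (n : ℕ) (a b d : Fin n → K), (∀ i j, a i + b i * d j ≠ 0) →
      (Matrix.of fun i j : Fin n => (a i + b i * d j)⁻¹).det =
        (∏ i : Fin n, ∏ j ∈ Finset.Ioi i, (a j * b i - a i * b j) * (d j - d i)) /
          ∏ i : Fin n, ∏ j : Fin n, (a i + b i * d j) := by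
  intro n
  induction n with
  | zero => intro a b d _; simp
  | succ n ih =>
    intro a b d h
    set la : Fin (n+1) := Fin.last n with hla
    set C : Matrix (Fin (n+1)) (Fin (n+1)) K :=
      Matrix.of fun i j => if j = la then 1 else b i * (d la - d j) * (a i + b i * d j)⁻¹
      with hC
    set E : Matrix (Fin (n+1)) (Fin (n+1)) K :=
      Matrix.of fun i j =>
        if i = la then C i j
        else if j = la then 0 else
          (a la * b i - a i * b la) *
            (((d la - d j) * (a la + b la * d j)⁻¹) * (a i + b i * d j)⁻¹)
      with hE
    -- Step A: column operations (subtract last column), then factor rows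
    have stepA :
        (Matrix.of fun i j : Fin (n+1) => (a i + b i * d j)⁻¹).det =
        (∏ i : Fin (n+1), (a i + b i * d la)⁻¹) * C.det := by
      rw [← Matrix.det_mul_column (fun i => (a i + b i * d la)⁻¹) C]
      rw [← Matrix.det_transpose (Matrix.of fun i j : Fin (n+1) => (a i + b i * d j)⁻¹)]
      rw [Matrix.det_eq_of_forall_row_eq_smul_add_const
        (A := (Matrix.of fun i j : Fin (n+1) => (a i + b i * d j)⁻¹).transpose)
        (B := (Matrix.of fun i j : Fin (n+1) =>
            (a i + b i * d la)⁻¹ * C i j).transpose)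
        (fun j => if j = la then 0 else 1) la (by simp)
        ?_]
      · rw [Matrix.det_transpose]
      · intro jj ii
        simp only [Matrix.transpose_apply, Matrix.of_apply, hC]
        by_cases hj : jj = la
        · simp [hj]
        · simp only [hj, if_false, one_mul, ↓reduceIte]
          have h1 := h ii jj
          have h2 := h ii la
          field_simp
          ring
    -- Step B: row operations (subtract last row)
    have stepB : E.det = C.det := by
      refine Matrix.det_eq_of_forall_row_eq_smul_add_const
        (fun i => if i = la then 0 else -1) la (by simp) ?_
      intro ii jj
      simp only [hE, hC, Matrix.of_apply]
      by_cases hi : ii = la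
      · simp [hi]
      · simp only [hi, if_false]
        by_cases hj : jj = la
        · simp [hj]
        · simp only [hj, if_false]
          have h1 := h ii jj
          have h2 := h la jj
          field_simp
          ring
    -- Step C: expand along last column
    have stepC : E.det = (E.submatrix Fin.castSucc Fin.castSucc).det := by
      rw [Matrix.det_succ_column E la]
      rw [Fintype.sum_eq_single la]
      · have : E la la = 1 := by simp [hE, hC]
        rw [this]
        simp only [hla]
        rw [Fin.succAbove_last]
        rw [← hla]
        ring_nf
        rw [pow_mul, ← pow_mul, mul_comm ((la:ℕ)) 2, pow_mul, neg_one_sq, one_pow, mul_one]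
      · intro i hi
        have : E i la = 0 := by simp [hE, hC, hi]
        rw [this]
        ring
    -- Step D: compute the minor via factoring and the induction hypothesis
    have stepD : (E.submatrix Fin.castSucc Fin.castSucc).det =
        (∏ i : Fin n, (a la * b i.castSucc - a i.castSucc * b la)) *
          ((∏ j : Fin n, (d la - d j.castSucc) * (a la + b la * d j.castSucc)⁻¹) *
            ((∏ i : Fin n, ∏ j ∈ Finset.Ioi i,
                (a j.castSucc * b i.castSucc - a i.castSucc * b j.castSucc) *
                  (d j.castSucc - d i.castSucc)) /
              ∏ i : Fin n, ∏ j : Fin n, (a i.castSucc + b i.castSucc * d j.castSucc))) := by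
      have hsub : E.submatrix Fin.castSucc Fin.castSucc =
          Matrix.of fun i j : Fin n =>
            (a la * b i.castSucc - a i.castSucc * b la) *
              ((((d la - d j.castSucc) * (a la + b la * d j.castSucc)⁻¹)) *
                (a i.castSucc + b i.castSucc * d j.castSucc)⁻¹) := by
        ext i j
        simp only [Matrix.submatrix_apply, hE, Matrix.of_apply]
        rw [if_neg (Fin.castSucc_lt_last i).ne, if_neg (Fin.castSucc_lt_last j).ne]
      rw [hsub, Matrix.det_mul_column (fun i : Fin n => a la * b i.castSucc - a i.castSucc * b la)
        (fun i j : Fin n => (d la - d j.castSucc) * (a la + b la * d j.castSucc)⁻¹ *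
          (a i.castSucc + b i.castSucc * d j.castSucc)⁻¹)]
      congr 1
      rw [show (Matrix.det fun i j : Fin n =>
            (d la - d j.castSucc) * (a la + b la * d j.castSucc)⁻¹ *
              (a i.castSucc + b i.castSucc * d j.castSucc)⁻¹) =
          Matrix.det (Matrix.of fun i j : Fin n =>
            ((d la - d j.castSucc) * (a la + b la * d j.castSucc)⁻¹) *
              (Matrix.of fun i j : Fin n =>
                (a i.castSucc + b i.castSucc * d j.castSucc)⁻¹) i j) from rfl]
      rw [Matrix.det_mul_row]
      congr 1
      exact ih (fun i => a i.castSucc) (fun i => b i.castSucc) (fun j => d j.castSucc)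
        (fun i j => h i.castSucc j.castSucc)
    -- Final assembly
    have hPn : (∏ i : Fin n, ∏ j : Fin n, (a i.castSucc + b i.castSucc * d j.castSucc)) ≠ 0 :=
      Finset.prod_ne_zero_iff.mpr fun i _ => Finset.prod_ne_zero_iff.mpr fun j _ => h _ _
    have hQ : (∏ i : Fin (n+1), (a i + b i * d la)) ≠ 0 :=
      Finset.prod_ne_zero_iff.mpr fun i _ => h _ _
    have hR : (∏ j : Fin n, (a la + b la * d j.castSucc)) ≠ 0 :=
      Finset.prod_ne_zero_iff.mpr fun j _ => h _ _
    have hP : (∏ i : Fin (n+1), ∏ j : Fin (n+1), (a i + b i * d j)) =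
        (∏ i : Fin n, ∏ j : Fin n, (a i.castSucc + b i.castSucc * d j.castSucc)) *
          (∏ j : Fin n, (a la + b la * d j.castSucc)) *
          (∏ i : Fin (n+1), (a i + b i * d la)) := by
      have inner : ∀ i : Fin (n+1), (∏ j : Fin (n+1), (a i + b i * d j)) =
          (∏ j : Fin n, (a i + b i * d j.castSucc)) * (a i + b i * d la) :=
        fun i => Fin.prod_univ_castSucc _
      simp only [inner]
      rw [Fin.prod_univ_castSucc
          (f := fun i => (∏ j : Fin n, (a i + b i * d j.castSucc)) * (a i + b i * d la)),
        Finset.prod_mul_distrib,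
        Fin.prod_univ_castSucc (f := fun i => a i + b i * d la)]
      simp only [← hla]
      ring
    rw [stepA, ← stepB, stepC, stepD,
      prod_Ioi_split n (fun i j => (a j * b i - a i * b j) * (d j - d i)), hP]
    simp only [← hla]
    rw [show (∏ i : Fin (n+1), (a i + b i * d la)⁻¹) =
        (∏ i : Fin (n+1), (a i + b i * d la))⁻¹ from Finset.prod_inv_distrib _,
      Finset.prod_mul_distrib (f := fun j : Fin n => d la - d j.castSucc)
        (g := fun j : Fin n => (a la + b la * d j.castSucc)⁻¹),
      show (∏ j : Fin n, (a la + b la * d j.castSucc)⁻¹) =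
        (∏ j : Fin n, (a la + b la * d j.castSucc))⁻¹ from Finset.prod_inv_distrib _,
      Finset.prod_mul_distrib
        (f := fun i : Fin n => a la * b i.castSucc - a i.castSucc * b la)
        (g := fun i : Fin n => d la - d i.castSucc)]
    field_simp
    have hQQ : (∏ x : Fin (n+1), (a x + d la * b x)) = ∏ x : Fin (n+1), (a x + b x * d la) :=
      Finset.prod_congr rfl fun x _ => by ring
    have hBB : (∏ x : Fin n, (a la * b x.castSucc - b la * a x.castSucc)) =
        ∏ x : Fin n, (a la * b x.castSucc - a x.castSucc * b la) :=
      Finset.prod_congr rfl fun x _ => by ring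
    rw [hQQ, eq_div_iff hQ, hBB]
    ring

noncomputable section

open scoped BigOperators

/-- **A further Cauchy determinant.**  With `ȳⱼ = (yⱼ)⁻¹`,
`det[1/((1-xᵢyⱼ)(1-xᵢȳⱼ))] = Δ(x) Δ(y) ∏_{i<j} (1-xᵢxⱼ)(1-ȳᵢȳⱼ) / ∏_{i,j} (1-xᵢyⱼ)(1-xᵢȳⱼ)`. -/
theorem symplectic_cauchy_determinant {K : Type*} [Field K] (n : ℕ) (x y : Fin n → K)
    (hy0 : ∀ j, y j ≠ 0)
    (h1 : ∀ i j, x i * y j ≠ 1) (h2 : ∀ i j, x i * (y j)⁻¹ ≠ 1) :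
    (Matrix.of fun i j : Fin n =>
        1 / ((1 - x i * y j) * (1 - x i * (y j)⁻¹))).det =
      (∏ i : Fin n, ∏ j ∈ Finset.Ioi i, (x i - x j)) *
        (∏ i : Fin n, ∏ j ∈ Finset.Ioi i, (y i - y j)) *
        (∏ i : Fin n, ∏ j ∈ Finset.Ioi i, (1 - x i * x j) * (1 - (y i)⁻¹ * (y j)⁻¹)) /
        ∏ i : Fin n, ∏ j : Fin n, (1 - x i * y j) * (1 - x i * (y j)⁻¹) := by
  set a : Fin n → K := fun i => 1 + x i * x i with ha
  set b : Fin n → K := fun i => -(x i) with hb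
  set dd : Fin n → K := fun j => y j + (y j)⁻¹ with hd
  have key : ∀ i j, (1 - x i * y j) * (1 - x i * (y j)⁻¹) = a i + b i * dd j := by
    intro i j
    have hy := hy0 j
    simp only [ha, hb, hd]
    field_simp
    ring
  have hne : ∀ i j, a i + b i * dd j ≠ 0 := by
    intro i j
    rw [← key]
    exact mul_ne_zero (sub_ne_zero.mpr fun hh => h1 i j hh.symm)
      (sub_ne_zero.mpr fun hh => h2 i j hh.symm)
  have hM : (Matrix.of fun i j : Fin n => 1 / ((1 - x i * y j) * (1 - x i * (y j)⁻¹)))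
      = Matrix.of fun i j : Fin n => (a i + b i * dd j)⁻¹ := by
    ext i j
    rw [Matrix.of_apply, Matrix.of_apply, one_div, key]
  rw [hM, cauchy_affine n a b dd hne]
  congr 1
  · calc (∏ i : Fin n, ∏ j ∈ Finset.Ioi i, (a j * b i - a i * b j) * (dd j - dd i))
        = ∏ i : Fin n, ∏ j ∈ Finset.Ioi i,
            (x i - x j) * (y i - y j) * ((1 - x i * x j) * (1 - (y i)⁻¹ * (y j)⁻¹)) := by
          refine Finset.prod_congr rfl fun i _ => Finset.prod_congr rfl fun j _ => ?_
          have hyi := hy0 i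
          have hyj := hy0 j
          simp only [ha, hb, hd]
          field_simp
          ring
      _ = _ := by simp only [Finset.prod_mul_distrib]
  · refine Finset.prod_congr rfl fun i _ => Finset.prod_congr rfl fun j _ => (key i j).symm
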